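/- For all x, y, z ∈ ℂ^{n×r}, the inequality ‖x − y‖₂ · ‖x + y‖₂ ≤ ‖x − z‖₂ · ‖x + z‖₂ + ‖z − y‖₂ · ‖z + y‖₂ holds, where ‖·‖₂ is the Frobenius norm. -/

import Mathlib

open Matrix Filter
open scoped ComplexOrder

noncomputable def frob {p q : ℕ} (x : Matrix (Fin p) (Fin q) ℂ) : ℝ :=
  Real.sqrt (Matrix.trace (xᴴ * x)).re

noncomputable def rinner {p q : ℕ} (X Y : Matrix (Fin p) (Fin q) ℂ) : ℝ :=
  (Matrix.trace (Xᴴ * Y)).re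

/-- The square root of a positive semidefinite matrix, as `Matrix.PosSemidef.sqrt` was defined
in the older Mathlib (removed since). -/
noncomputable def posSemidefSqrt {m : Type*} [Fintype m] [DecidableEq m] {A : Matrix m m ℂ}
    (hA : A.PosSemidef) : Matrix m m ℂ :=
  (hA.1.eigenvectorUnitary : Matrix m m ℂ) *
    diagonal ((↑) ∘ Real.sqrt ∘ hA.1.eigenvalues) * (star hA.1.eigenvectorUnitary : Matrix m m ℂ)

noncomputable def nuclear {p q : ℕ} (x : Matrix (Fin p) (Fin q) ℂ) : ℝ :=
  (Matrix.trace (posSemidefSqrt (Matrix.posSemidef_conjTranspose_mul_self x))).re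

noncomputable def theta {n r : ℕ} (x : Matrix (Fin n) (Fin r) ℂ) : Matrix (Fin n) (Fin n) ℂ :=
  posSemidefSqrt (Matrix.posSemidef_self_mul_conjTranspose x)

noncomputable def psi {n r : ℕ} (x : Matrix (Fin n) (Fin r) ℂ) : Matrix (Fin n) (Fin n) ℂ :=
  frob x • theta x

noncomputable def Dmet {n r : ℕ} (x y : Matrix (Fin n) (Fin r) ℂ) : ℝ :=
  ⨅ U : Matrix.unitaryGroup (Fin r) ℂ, frob (x - y * (U : Matrix (Fin r) (Fin r) ℂ))

noncomputable def dmet {n r : ℕ} (x y : Matrix (Fin n) (Fin r) ℂ) : ℝ :=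
  ⨅ U : Matrix.unitaryGroup (Fin r) ℂ,
    frob (x - y * (U : Matrix (Fin r) (Fin r) ℂ)) * frob (x + y * (U : Matrix (Fin r) (Fin r) ℂ))



open scoped RealInnerProductSpace

set_option maxHeartbeats 1000000

set_option maxHeartbeats 1000000

lemma aux_cs (al be s1 s2 t1 t2 : ℝ) (h1 : 0 ≤ al) (h2 : 0 ≤ be) :
    (al * (s1 * t1) - be * (s2 * t2)) ^ 2
      ≤ (al * s1 ^ 2 + be * s2 ^ 2) * (al * t1 ^ 2 + be * t2 ^ 2) := by
  nlinarith [mul_nonneg (mul_nonneg h1 h2) (sq_nonneg (s1 * t2 + s2 * t1))]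

lemma aux_fin (X P Q : ℝ) (hPQ : 0 ≤ P * Q) (h : X ^ 2 ≤ P ^ 2 * Q ^ 2) : X ≤ P * Q := by
  nlinarith

theorem para_abstract {E : Type*} [NormedAddCommGroup E] [InnerProductSpace ℝ E]
    (x y z : E) : ‖x - y‖ * ‖x + y‖ ≤ ‖x - z‖ * ‖x + z‖ + ‖z - y‖ * ‖z + y‖ := by
  set u := x - y with hu
  set v := x + y with hv
  set a := ‖u‖ with ha
  set b := ‖v‖ with hb
  set t : ℝ := ⟪u, v⟫ with htdef
  set g := b • u + a • v with hgdef
  set h := b • u - a • v with hhdef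
  set α := (‖g‖ ^ 2)⁻¹ with hα
  set β := (‖h‖ ^ 2)⁻¹ with hβ
  have ha0 : 0 ≤ a := norm_nonneg _
  have hb0 : 0 ≤ b := norm_nonneg _
  have hα0 : 0 ≤ α := by positivity
  have hβ0 : 0 ≤ β := by positivity
  have htle : |t| ≤ a * b := abs_real_inner_le_norm u v
  have ht1 : t ≤ a * b := (abs_le.mp htle).2
  have ht2 : -(a*b) ≤ t := (abs_le.mp htle).1
  -- inner product computations
  have hgg : ‖g‖ ^ 2 = 2 * a * b * (a * b + t) := by
    rw [← real_inner_self_eq_norm_sq, hgdef]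
    simp only [inner_add_left, inner_add_right, real_inner_smul_left, real_inner_smul_right]
    rw [real_inner_comm u v]
    rw [real_inner_self_eq_norm_sq, real_inner_self_eq_norm_sq, ← ha, ← hb, ← htdef]
    ring
  have hhh : ‖h‖ ^ 2 = 2 * a * b * (a * b - t) := by
    rw [← real_inner_self_eq_norm_sq, hhdef]
    simp only [inner_sub_left, inner_sub_right, real_inner_smul_left, real_inner_smul_right]
    rw [real_inner_comm u v]
    rw [real_inner_self_eq_norm_sq, real_inner_self_eq_norm_sq, ← ha, ← hb, ← htdef]
    ring
  have hhg : ⟪h, g⟫ = 0 := by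
    rw [hgdef, hhdef]
    simp only [inner_add_right, inner_sub_left, real_inner_smul_left, real_inner_smul_right]
    rw [real_inner_comm u v]
    rw [real_inner_self_eq_norm_sq, real_inner_self_eq_norm_sq, ← ha, ← hb, ← htdef]
    ring
  have hαg : α * α * ‖g‖ ^ 2 = α := by
    rcases eq_or_ne (‖g‖ ^ 2) 0 with h0 | h0
    · simp [hα, h0]
    · rw [hα]; field_simp
  have hβh : β * β * ‖h‖ ^ 2 = β := by
    rcases eq_or_ne (‖h‖ ^ 2) 0 with h0 | h0
    · simp [hβ, h0]
    · rw [hβ]; field_simp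
  -- Bessel inequality for the orthogonal pair g, h
  have bessel : ∀ p : E, α * ⟪g, p⟫ ^ 2 + β * ⟪h, p⟫ ^ 2 ≤ ‖p‖ ^ 2 := by
    intro p
    have key : (0:ℝ) ≤ ‖p - (α * ⟪g, p⟫) • g - (β * ⟪h, p⟫) • h‖ ^ 2 := sq_nonneg _
    rw [← real_inner_self_eq_norm_sq] at key
    simp only [inner_sub_left, inner_sub_right, real_inner_smul_left, real_inner_smul_right] at key
    rw [real_inner_comm g p, real_inner_comm h p, real_inner_comm h g] at key
    rw [real_inner_self_eq_norm_sq p, real_inner_self_eq_norm_sq g, real_inner_self_eq_norm_sq h,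
      hhg] at key
    have e1 : α * α * ‖g‖ ^ 2 * (⟪g, p⟫ : ℝ) ^ 2 = α * (⟪g, p⟫ : ℝ) ^ 2 := by rw [hαg]
    have e2 : β * β * ‖h‖ ^ 2 * (⟪h, p⟫ : ℝ) ^ 2 = β * (⟪h, p⟫ : ℝ) ^ 2 := by rw [hβh]
    nlinarith [e1, e2, key]
  -- the bilinear bound
  have bound : ∀ p q : E, α * (⟪g, p⟫ * ⟪g, q⟫) - β * (⟪h, p⟫ * ⟪h, q⟫) ≤ ‖p‖ * ‖q‖ := by
    intro p q
    have b1 := bessel p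
    have b2 := bessel q
    have step1 := aux_cs α β ⟪g, p⟫ ⟪h, p⟫ ⟪g, q⟫ ⟪h, q⟫ hα0 hβ0
    have step2 : (α * ⟪g, p⟫ ^ 2 + β * ⟪h, p⟫ ^ 2) * (α * ⟪g, q⟫ ^ 2 + β * ⟪h, q⟫ ^ 2)
        ≤ ‖p‖ ^ 2 * ‖q‖ ^ 2 := by
      have hq0 : (0:ℝ) ≤ α * ⟪g, q⟫ ^ 2 + β * ⟪h, q⟫ ^ 2 := by positivity
      exact mul_le_mul b1 b2 hq0 (sq_nonneg _)
    exact aux_fin _ _ _ (mul_nonneg (norm_nonneg p) (norm_nonneg q)) (le_trans step1 step2)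
  -- the value on (u, v)
  have T1 : α * (⟪g, u⟫ * ⟪g, v⟫) = (a * b + t) / 2 := by
    have hug : ⟪g, u⟫ = a * (a * b + t) := by
      rw [hgdef]
      simp only [inner_add_left, real_inner_smul_left]
      rw [real_inner_comm u v, real_inner_self_eq_norm_sq, ← ha, ← htdef]; ring
    have hgv : ⟪g, v⟫ = b * (a * b + t) := by
      rw [hgdef]
      simp only [inner_add_left, real_inner_smul_left]
      rw [real_inner_self_eq_norm_sq, ← hb, ← htdef]; ring
    rcases eq_or_ne (a * b * (a * b + t)) 0 with h0 | h0
    · have hz : a * b + t = 0 := by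
        rcases mul_eq_zero.mp h0 with hab | hs
        · have htz : t = 0 := by nlinarith [abs_nonneg t]
          rw [htz]; nlinarith
        · exact hs
      rw [hug, hgv, hz]; ring
    · have hGnz : ‖g‖ ^ 2 ≠ 0 := by rw [hgg]; intro hc; apply h0; nlinarith
      rw [hα, hug, hgv, hgg]
      rw [hgg] at hGnz
      field_simp
      have ha' : a ≠ 0 := fun hc => h0 (by rw [hc]; ring)
      have hb' : b ≠ 0 := fun hc => h0 (by rw [hc]; ring)
      calc _ = t * (a * a⁻¹) * (b * b⁻¹) + a * b * (a * a⁻¹) * (b * b⁻¹) := by ring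
        _ = _ := by rw [mul_inv_cancel₀ ha', mul_inv_cancel₀ hb']; ring
  have T2 : β * (⟪h, u⟫ * ⟪h, v⟫) = -((a * b - t) / 2) := by
    have huh : ⟪h, u⟫ = a * (a * b - t) := by
      rw [hhdef]
      simp only [inner_sub_left, real_inner_smul_left]
      rw [real_inner_comm u v, real_inner_self_eq_norm_sq, ← ha, ← htdef]; ring
    have hhv : ⟪h, v⟫ = -(b * (a * b - t)) := by
      rw [hhdef]
      simp only [inner_sub_left, real_inner_smul_left]
      rw [real_inner_self_eq_norm_sq, ← hb, ← htdef]; ring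
    rcases eq_or_ne (a * b * (a * b - t)) 0 with h0 | h0
    · have hz : a * b - t = 0 := by
        rcases mul_eq_zero.mp h0 with hab | hs
        · have htz : t = 0 := by nlinarith [abs_nonneg t]
          rw [htz]; nlinarith
        · exact hs
      rw [huh, hhv, hz]; ring
    · have hHnz : ‖h‖ ^ 2 ≠ 0 := by rw [hhh]; intro hc; apply h0; nlinarith
      rw [hβ, huh, hhv, hhh]
      rw [hhh] at hHnz
      field_simp
      have ha' : a ≠ 0 := fun hc => h0 (by rw [hc]; ring)
      have hb' : b ≠ 0 := fun hc => h0 (by rw [hc]; ring)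
      calc _ = t * (a * a⁻¹) * (b * b⁻¹) - a * b * (a * a⁻¹) * (b * b⁻¹) := by ring
        _ = _ := by rw [mul_inv_cancel₀ ha', mul_inv_cancel₀ hb']; ring
  -- identity: quadratic form difference
  have identity : ∀ p q : E,
      (α * (⟪g, p⟫ * ⟪g, p⟫) - β * (⟪h, p⟫ * ⟪h, p⟫))
        - (α * (⟪g, q⟫ * ⟪g, q⟫) - β * (⟪h, q⟫ * ⟪h, q⟫))
      = α * (⟪g, p - q⟫ * ⟪g, p + q⟫) - β * (⟪h, p - q⟫ * ⟪h, p + q⟫) := by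
    intro p q
    simp only [inner_sub_right, inner_add_right]
    ring
  have main : a * b = (α * (⟪g, x⟫ * ⟪g, x⟫) - β * (⟪h, x⟫ * ⟪h, x⟫))
      - (α * (⟪g, y⟫ * ⟪g, y⟫) - β * (⟪h, y⟫ * ⟪h, y⟫)) := by
    rw [identity x y, ← hu, ← hv, T1, T2]
    ring
  have d1 := identity x z
  have d2 := identity z y
  have e1 := bound (x - z) (x + z)
  have e2 := bound (z - y) (z + y)
  linarith [main, d1, d2, e1, e2]

noncomputable def Tmat {n r : ℕ} (x : Matrix (Fin n) (Fin r) ℂ) :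
    EuclideanSpace ℂ (Fin n × Fin r) :=
  (WithLp.equiv 2 _).symm (fun p => x p.1 p.2)

lemma Tmat_add {n r : ℕ} (x y : Matrix (Fin n) (Fin r) ℂ) :
    Tmat (x + y) = Tmat x + Tmat y := rfl

lemma Tmat_sub {n r : ℕ} (x y : Matrix (Fin n) (Fin r) ℂ) :
    Tmat (x - y) = Tmat x - Tmat y := rfl

lemma frob_eq_norm {n r : ℕ} (x : Matrix (Fin n) (Fin r) ℂ) : frob x = ‖Tmat x‖ := by
  rw [frob, EuclideanSpace.norm_eq]
  congr 1
  rw [Matrix.trace]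
  rw [Complex.re_sum]
  rw [Fintype.sum_prod_type]
  rw [Finset.sum_comm]
  refine Finset.sum_congr rfl fun j _ => ?_
  rw [Matrix.diag_apply, Matrix.mul_apply, Complex.re_sum]
  refine Finset.sum_congr rfl fun i _ => ?_
  simp [Matrix.conjTranspose_apply, Complex.mul_re, Complex.normSq, Complex.sq_norm]
  ring
  rfl

/-- the parallelepiped triangle inequality
`‖x−y‖₂‖x+y‖₂ ≤ ‖x−z‖₂‖x+z‖₂ + ‖z−y‖₂‖z+y‖₂` for the Frobenius norm. -/
theorem frob_parallelepiped_triangle (n r : ℕ) (x y z : Matrix (Fin n) (Fin r) ℂ) :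
    frob (x - y) * frob (x + y) ≤
      frob (x - z) * frob (x + z) + frob (z - y) * frob (z + y) := by
  rw [frob_eq_norm (x - y), frob_eq_norm (x + y), frob_eq_norm (x - z), frob_eq_norm (x + z),
    frob_eq_norm (z - y), frob_eq_norm (z + y), Tmat_sub, Tmat_add, Tmat_sub, Tmat_add,
    Tmat_sub, Tmat_add]
  exact para_abstract (Tmat x) (Tmat y) (Tmat z)
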